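/- arXiv:2104.05210 — 3 statements merged into one kernel-verified Lean document; each statement's English description precedes it below -/
import Mathlib

section
/- Let A = (I_N, d)π and B = (b_{nm}) = (−dᵀ, I_{M−N})π, where π is an M×M permutation matrix and d is a real N×(M−N) matrix. Then for every n ∈ {1,…,M−N} and every x ∈ ℝ³, Σ_{m=1}^{M} b_{nm} · Σ_{J ∋ m} (−1)^{N−k(J,m)} · Δ_J(A) · V(J∖{m}) · exp(Σ_{j ∈ J∖{m}} θ_j(x)) = 0, where the inner sum runs over all N-element index sets J ⊆ {1,…,M} containing m, k(J,m) denotes the position of m in the increasing enumeration of J, and V(S) = ∏_{β<α} (κ_{s_α} − κ_{s_β}) for an index set S = {s₁ < ⋯ < s_{|S|}}. (This expresses the 𝒟′-symmetry 𝒟′ψ(x,κ)ᵀ = 0 of the Sato adjoint eigenfunction, cleared of the factor τ(x).) -/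
open Finset Matrix

noncomputable section

/-- `θ_j(x) = κ_j x₁ + κ_j² x₂ + κ_j³ x₃`. -/
def theta {M : ℕ} (κ : Fin M → ℝ) (j : Fin M) (x : Fin 3 → ℝ) : ℝ :=
  κ j * x 0 + κ j ^ 2 * x 1 + κ j ^ 3 * x 2

/-- The increasing enumeration of a `k`-element index set `s ⊆ {1,…,M}`. -/
def cols {M : ℕ} (k : ℕ) (s : Finset (Fin M)) (h : s.card = k) : Fin k → Fin M :=
  fun i => (s.orderIsoOfFin h i : Fin M)

/-- The Plücker coordinate `Δ_J(A)`: the `N×N` minor of `A` formed by the columns in `J`. -/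
def minor {N M : ℕ} (A : Matrix (Fin N) (Fin M) ℝ) (s : Finset (Fin M))
    (h : s.card = N) : ℝ :=
  (A.submatrix id (cols N s h)).det

/-- The Vandermonde-type factor `V(S) = ∏_{β<α} (κ_{s_α} − κ_{s_β})` for an index set
`S = {s₁ < ⋯ < s_k}`. -/
def vprod {M : ℕ} (k : ℕ) (κ : Fin M → ℝ) (s : Finset (Fin M)) (h : s.card = k) : ℝ :=
  ∏ p ∈ Finset.univ.filter (fun p : Fin k × Fin k => p.1 < p.2),
    (κ (cols k s h p.2) - κ (cols k s h p.1))

lemma cols_eq_orderEmbOfFin {M k : ℕ} (s : Finset (Fin M)) (h : s.card = k) :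
    cols k s h = s.orderEmbOfFin h := by
  funext i
  simp [cols, Finset.coe_orderIsoOfFin_apply]

lemma cols_pos_eq {M N' : ℕ} (J : Finset (Fin M)) (hJ : J.card = N' + 1) (m : Fin M)
    (hm : m ∈ J) : cols (N' + 1) J hJ ((J.orderIsoOfFin hJ).symm ⟨m, hm⟩) = m := by
  simp [cols]

lemma cols_insert {M N' : ℕ} {S : Finset (Fin M)} {m : Fin M} (hm : m ∉ S)
    (hS : S.card = N') (hJ : (insert m S).card = N' + 1) (j : Fin N') :
    cols (N' + 1) (insert m S) hJ
      ((((insert m S).orderIsoOfFin hJ).symm ⟨m, Finset.mem_insert_self m S⟩).succAbove j) =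
    cols N' S hS j := by
  set J := insert m S with hJdef
  set pos : Fin (N' + 1) := (J.orderIsoOfFin hJ).symm ⟨m, Finset.mem_insert_self m S⟩ with hpos
  have hsm : StrictMono (fun j : Fin N' => cols (N' + 1) J hJ (pos.succAbove j)) := by
    rw [cols_eq_orderEmbOfFin]
    exact (J.orderEmbOfFin hJ).strictMono.comp (Fin.strictMono_succAbove pos)
  have hmem : ∀ j : Fin N', cols (N' + 1) J hJ (pos.succAbove j) ∈ S := by
    intro j
    have h1 : cols (N' + 1) J hJ (pos.succAbove j) ∈ J := by
      rw [cols_eq_orderEmbOfFin]; exact J.orderEmbOfFin_mem hJ _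
    have h2 : cols (N' + 1) J hJ (pos.succAbove j) ≠ m := by
      intro hcontra
      have : cols (N' + 1) J hJ (pos.succAbove j) = cols (N' + 1) J hJ pos := by
        rw [hcontra, cols_pos_eq]
      have hinj : Function.Injective (cols (N' + 1) J hJ) := by
        rw [cols_eq_orderEmbOfFin]; exact (J.orderEmbOfFin hJ).injective
      exact Fin.succAbove_ne pos j (hinj this)
    rcases Finset.mem_insert.mp h1 with h | h
    · exact absurd h h2
    · exact h
  have := Finset.orderEmbOfFin_unique hS hmem hsm
  calc cols (N' + 1) J hJ (pos.succAbove j) = S.orderEmbOfFin hS j := congrFun this j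
    _ = cols N' S hS j := (congrFun (cols_eq_orderEmbOfFin S hS) j).symm

lemma det_updateRow_linear {n : Type*} [DecidableEq n] [Fintype n]
    (M : Matrix n n ℝ) (r : n) {ι : Type*} (s : Finset ι) (c : ι → ℝ) (v : ι → n → ℝ) :
    (M.updateRow r (∑ m ∈ s, c m • v m)).det = ∑ m ∈ s, c m * (M.updateRow r (v m)).det := by
  let L : (n → ℝ) →ₗ[ℝ] ℝ :=
    { toFun := fun u => (M.updateRow r u).det
      map_add' := fun u w => Matrix.det_updateRow_add M r u w
      map_smul' := fun a u => Matrix.det_updateRow_smul M r a u }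
  calc (M.updateRow r (∑ m ∈ s, c m • v m)).det = L (∑ m ∈ s, c m • v m) := rfl
    _ = ∑ m ∈ s, L (c m • v m) := map_sum L _ s
    _ = ∑ m ∈ s, c m * (M.updateRow r (v m)).det :=
        Finset.sum_congr rfl fun m _ => by rw [_root_.map_smul, smul_eq_mul]; rfl

lemma keyL0 {Md N' : ℕ} (A : Matrix (Fin (N' + 1)) (Fin Md) ℝ) (b : Fin Md → ℝ)
    (hker : ∀ i, ∑ m, A i m * b m = 0) (S : Finset (Fin Md)) (hS : S.card = N') :
    ∑ m, b m *
      (if h : m ∉ S then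
        (-1 : ℝ) ^
            ((((insert m S).orderIsoOfFin
                  (by rw [Finset.card_insert_of_notMem h, hS])).symm
                ⟨m, Finset.mem_insert_self m S⟩ : Fin (N' + 1)) : ℕ) *
          minor A (insert m S) (by rw [Finset.card_insert_of_notMem h, hS])
      else 0) = 0 := by
  classical
  set sc : Fin N' → Fin Md := cols N' S hS with hsc
  set G : Matrix (Fin (N' + 1)) (Fin (N' + 1)) ℝ :=
    Matrix.of (Fin.cons (fun _ => 0) (fun j i => A i (sc j))) with hG
  have hdet : ∀ m : Fin Md,
      b m * (if h : m ∉ S then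
        (-1 : ℝ) ^
            ((((insert m S).orderIsoOfFin
                  (by rw [Finset.card_insert_of_notMem h, hS])).symm
                ⟨m, Finset.mem_insert_self m S⟩ : Fin (N' + 1)) : ℕ) *
          minor A (insert m S) (by rw [Finset.card_insert_of_notMem h, hS])
      else 0) = b m * (G.updateRow 0 (fun i => A i m)).det := by
    intro m
    by_cases hm : m ∉ S
    · rw [dif_pos hm]
      congr 1
      have hJ : (insert m S).card = N' + 1 := by rw [Finset.card_insert_of_notMem hm, hS]
      set pos : Fin (N' + 1) :=
        ((insert m S).orderIsoOfFin hJ).symm ⟨m, Finset.mem_insert_self m S⟩ with hposdef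
      have hcomp : (fun k => cols (N' + 1) (insert m S) hJ (pos.cycleRange.symm k)) =
          Fin.cons m sc := by
        funext k
        induction k using Fin.cases with
        | zero => rw [Fin.cycleRange_symm_zero, Fin.cons_zero, cols_pos_eq]
        | succ j =>
          rw [Fin.cycleRange_symm_succ, Fin.cons_succ, cols_insert hm hS hJ j]
      have hW : G.updateRow 0 (fun i => A i m) = (A.submatrix id (Fin.cons m sc))ᵀ := by
        ext k i
        induction k using Fin.cases with
        | zero => simp [Matrix.updateRow_self, Fin.cons_zero]
        | succ j =>
          rw [Matrix.updateRow_ne (Fin.succ_ne_zero j)]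
          simp [hG, Fin.cons_succ]
      rw [hW, Matrix.det_transpose]
      have hsub : A.submatrix id (Fin.cons m sc) =
          (A.submatrix id (cols (N' + 1) (insert m S) hJ)).submatrix id ⇑pos.cycleRange⁻¹ := by
        rw [Matrix.submatrix_submatrix, ← hcomp]
        rfl
      rw [hsub, Matrix.det_permute', Equiv.Perm.sign_inv, Fin.sign_cycleRange]
      rw [minor]
      push_cast
      ring
    · rw [dif_neg hm]
      push_neg at hm
      obtain ⟨j, hj⟩ : ∃ j : Fin N', sc j = m :=
        ⟨(S.orderIsoOfFin hS).symm ⟨m, hm⟩, by simp [hsc, cols]⟩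
      have : (G.updateRow 0 (fun i => A i m)).det = 0 := by
        apply Matrix.det_zero_of_row_eq (i := 0) (j := j.succ) (Fin.succ_ne_zero j).symm
        funext i
        rw [Matrix.updateRow_self, Matrix.updateRow_ne (Fin.succ_ne_zero j)]
        simp [hG, Fin.cons_succ, hj]
      rw [this]
  calc ∑ m, b m * _ = ∑ m, b m * (G.updateRow 0 (fun i => A i m)).det :=
        Finset.sum_congr rfl fun m _ => hdet m
    _ = (G.updateRow 0 (∑ m, b m • fun i => A i m)).det := by
        rw [det_updateRow_linear]
    _ = 0 := by
        have hz : (∑ m, b m • fun i : Fin (N' + 1) => A i m) = fun _ => (0 : ℝ) := by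
          funext i
          simp only [Finset.sum_apply, Pi.smul_apply, smul_eq_mul]
          rw [← hker i]
          exact Finset.sum_congr rfl fun m _ => mul_comm _ _
        rw [hz]
        exact Matrix.det_eq_zero_of_row_eq_zero 0 fun j => by rw [Matrix.updateRow_self]

def Phi {Md : ℕ} (N' : ℕ) (A : Matrix (Fin (N' + 1)) (Fin Md) ℝ) (κ : Fin Md → ℝ)
    (x : Fin 3 → ℝ) (m : Fin Md) (S : Finset (Fin Md)) : ℝ :=
  if h : S.card = N' ∧ m ∉ S then
    (-1 : ℝ) ^
        (N' - ((((insert m S).orderIsoOfFin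
              (by rw [Finset.card_insert_of_notMem h.2, h.1])).symm
            ⟨m, Finset.mem_insert_self m S⟩ : Fin (N' + 1)) : ℕ)) *
      minor A (insert m S) (by rw [Finset.card_insert_of_notMem h.2, h.1]) *
      vprod N' κ S h.1 * Real.exp (∑ j ∈ S, theta κ j x)
  else 0

/-- **`𝒟′`-symmetry of the Sato adjoint eigenfunction.**
Let `A = (I_N, d)π` and `B = (−dᵀ, I_{M−N})π` (blocks with columns permuted by `π`),
with `1 ≤ N < M = N + K` and `κ₁ < ⋯ < κ_M`. Then for every `n ∈ {1,…,M−N}` and `x ∈ ℝ³`: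
`Σ_{m=1}^{M} b_{nm} Σ_{J ∋ m} (−1)^{N−k(J,m)} Δ_J(A) V(J∖{m}) e^{Σ_{j∈J∖{m}} θ_j(x)} = 0`,
where `k(J,m)` is the (1-based) position of `m` in the increasing enumeration of `J`
(so with the 0-based position `pos`, the exponent `N − k(J,m)` is `N − 1 − pos`). -/
theorem sato_Dprime_symmetry (N K : ℕ) (hN : 1 ≤ N) (hK : 1 ≤ K)
    (κ : Fin (N + K) → ℝ) (hκ : StrictMono κ)
    (π : Equiv.Perm (Fin (N + K))) (d : Matrix (Fin N) (Fin K) ℝ)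
    (A : Matrix (Fin N) (Fin (N + K)) ℝ)
    (hA : A = (Matrix.fromCols 1 d).submatrix id (fun j => finSumFinEquiv.symm (π⁻¹ j)))
    (B : Matrix (Fin K) (Fin (N + K)) ℝ)
    (hB : B = (Matrix.fromCols (-dᵀ) 1).submatrix id (fun j => finSumFinEquiv.symm (π⁻¹ j)))
    (n : Fin K) (x : Fin 3 → ℝ) :
    ∑ m : Fin (N + K), B n m *
      ∑ s : {s : Finset (Fin (N + K)) // s.card = N ∧ m ∈ s},
        (-1 : ℝ) ^ (N - 1 - (((s.1.orderIsoOfFin s.2.1).symm ⟨m, s.2.2⟩ : Fin N) : ℕ)) *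
          minor A s.1 s.2.1 *
          vprod (N - 1) κ (s.1.erase m)
            (by rw [Finset.card_erase_of_mem s.2.2, s.2.1]) *
          Real.exp (∑ j ∈ s.1.erase m, theta κ j x) = 0 := by

  classical
  obtain ⟨N', rfl⟩ : ∃ N', N = N' + 1 := ⟨N - 1, by omega⟩
  have hker : ∀ i, ∑ m, A i m * B n m = 0 := by
    intro i
    rw [hA, hB]
    rw [show (∑ m, ((Matrix.fromCols 1 d).submatrix id
          (fun j => finSumFinEquiv.symm (π⁻¹ j))) i m
        * ((Matrix.fromCols (-dᵀ) 1).submatrix id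
          (fun j => finSumFinEquiv.symm (π⁻¹ j))) n m) =
      ∑ z, Matrix.fromCols 1 d i z * Matrix.fromCols (-dᵀ) 1 n z from
      Fintype.sum_equiv ((π⁻¹ : Equiv.Perm (Fin (N' + 1 + K))).trans finSumFinEquiv.symm)
        _ _ (fun m => rfl)]
    rw [Fintype.sum_sum_type]
    simp [Matrix.fromCols_apply_inl, Matrix.fromCols_apply_inr, Matrix.one_apply,
      ite_mul, mul_ite, Finset.sum_ite_eq, Finset.sum_ite_eq']
  simp only [Nat.add_sub_cancel]
  have key : ∀ m : Fin (N' + 1 + K),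
      (∑ s : {s : Finset (Fin (N' + 1 + K)) // s.card = N' + 1 ∧ m ∈ s},
        (-1 : ℝ) ^ (N' - (((s.1.orderIsoOfFin s.2.1).symm ⟨m, s.2.2⟩ : Fin (N' + 1)) : ℕ)) *
          minor A s.1 s.2.1 *
          vprod N' κ (s.1.erase m)
            (by rw [Finset.card_erase_of_mem s.2.2, s.2.1]; rfl) *
          Real.exp (∑ j ∈ s.1.erase m, theta κ j x)) =
      ∑ S : Finset (Fin (N' + 1 + K)), Phi N' A κ x m S := by
    intro m
    let E : {s : Finset (Fin (N' + 1 + K)) // s.card = N' + 1 ∧ m ∈ s} ≃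
        {S : Finset (Fin (N' + 1 + K)) // S.card = N' ∧ m ∉ S} :=
      { toFun := fun s => ⟨s.1.erase m,
          by rw [Finset.card_erase_of_mem s.2.2, s.2.1]; rfl, Finset.notMem_erase m s.1⟩
        invFun := fun S => ⟨insert m S.1,
          by rw [Finset.card_insert_of_notMem S.2.2, S.2.1], Finset.mem_insert_self m S.1⟩
        left_inv := fun s => Subtype.ext (Finset.insert_erase s.2.2)
        right_inv := fun S => Subtype.ext (Finset.erase_insert S.2.2) }
    calc _ = ∑ S : {S : Finset (Fin (N' + 1 + K)) // S.card = N' ∧ m ∉ S},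
            Phi N' A κ x m S.1 := by
          rw [← Equiv.sum_comp E.symm
            (fun s : {s : Finset (Fin (N' + 1 + K)) // s.card = N' + 1 ∧ m ∈ s} =>
              (-1 : ℝ) ^ (N' - (((s.1.orderIsoOfFin s.2.1).symm ⟨m, s.2.2⟩ : Fin (N' + 1)) : ℕ)) *
                minor A s.1 s.2.1 *
                vprod N' κ (s.1.erase m)
                  (by rw [Finset.card_erase_of_mem s.2.2, s.2.1]; rfl) *
                Real.exp (∑ j ∈ s.1.erase m, theta κ j x))]
          refine Finset.sum_congr rfl fun S _ => ?_
          have he : (insert m S.1).erase m = S.1 := Finset.erase_insert S.2.2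
          simp only [E, Equiv.coe_fn_symm_mk, he]
          rw [Phi, dif_pos (⟨S.2.1, S.2.2⟩ : S.1.card = N' ∧ m ∉ S.1)]
      _ = ∑ S ∈ Finset.univ.filter (fun S : Finset (Fin (N' + 1 + K)) => S.card = N' ∧ m ∉ S),
            Phi N' A κ x m S := (Finset.sum_subtype _ (by simp) _).symm
      _ = ∑ S : Finset (Fin (N' + 1 + K)), Phi N' A κ x m S := by
          refine Finset.sum_filter_of_ne fun S _ hne => ?_
          by_contra hp
          exact hne (dif_neg hp)
  calc ∑ m : Fin (N' + 1 + K), B n m * _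
      = ∑ m : Fin (N' + 1 + K), B n m * ∑ S : Finset (Fin (N' + 1 + K)), Phi N' A κ x m S :=
        Finset.sum_congr rfl fun m _ => congrArg (B n m * ·) (key m)
    _ = ∑ m : Fin (N' + 1 + K), ∑ S : Finset (Fin (N' + 1 + K)), B n m * Phi N' A κ x m S := by
        simp_rw [Finset.mul_sum]
    _ = ∑ S : Finset (Fin (N' + 1 + K)), ∑ m : Fin (N' + 1 + K), B n m * Phi N' A κ x m S :=
        Finset.sum_comm
    _ = 0 := by
        refine Finset.sum_eq_zero fun S _ => ?_
        by_cases hS : S.card = N'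
        · have hfac : ∀ m : Fin (N' + 1 + K), B n m * Phi N' A κ x m S =
              ((-1 : ℝ) ^ N' * vprod N' κ S hS * Real.exp (∑ j ∈ S, theta κ j x)) *
              (B n m * (if h : m ∉ S then
                (-1 : ℝ) ^
                    ((((insert m S).orderIsoOfFin
                          (by rw [Finset.card_insert_of_notMem h, hS])).symm
                        ⟨m, Finset.mem_insert_self m S⟩ : Fin (N' + 1)) : ℕ) *
                  minor A (insert m S) (by rw [Finset.card_insert_of_notMem h, hS])
              else 0)) := by
            intro m
            by_cases hm : m ∉ S
            · rw [Phi, dif_pos (⟨hS, hm⟩ : S.card = N' ∧ m ∉ S), dif_pos hm]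
              have hple : ((((insert m S).orderIsoOfFin
                    (by rw [Finset.card_insert_of_notMem hm, hS])).symm
                  ⟨m, Finset.mem_insert_self m S⟩ : Fin (N' + 1)) : ℕ) ≤ N' := Fin.is_le _
              have hsign : (-1 : ℝ) ^ (N' - ((((insert m S).orderIsoOfFin
                    (by rw [Finset.card_insert_of_notMem hm, hS])).symm
                  ⟨m, Finset.mem_insert_self m S⟩ : Fin (N' + 1)) : ℕ)) =
                  (-1 : ℝ) ^ N' * (-1 : ℝ) ^ ((((insert m S).orderIsoOfFin
                    (by rw [Finset.card_insert_of_notMem hm, hS])).symm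
                  ⟨m, Finset.mem_insert_self m S⟩ : Fin (N' + 1)) : ℕ) := by
                generalize hp : ((((insert m S).orderIsoOfFin
                    (by rw [Finset.card_insert_of_notMem hm, hS])).symm
                  ⟨m, Finset.mem_insert_self m S⟩ : Fin (N' + 1)) : ℕ) = p at hple ⊢
                rw [← pow_add, show N' + p = (N' - p) + 2 * p by omega, pow_add, pow_mul,
                  neg_one_sq, one_pow, mul_one]
              rw [hsign]
              ring
            · rw [Phi, dif_neg (fun h : S.card = N' ∧ m ∉ S => hm h.2), dif_neg hm]
              ring
          calc ∑ m : Fin (N' + 1 + K), B n m * Phi N' A κ x m S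
              = ∑ m : Fin (N' + 1 + K),
                  ((-1 : ℝ) ^ N' * vprod N' κ S hS * Real.exp (∑ j ∈ S, theta κ j x)) *
                  (B n m * (if h : m ∉ S then
                    (-1 : ℝ) ^
                        ((((insert m S).orderIsoOfFin
                              (by rw [Finset.card_insert_of_notMem h, hS])).symm
                            ⟨m, Finset.mem_insert_self m S⟩ : Fin (N' + 1)) : ℕ) *
                      minor A (insert m S) (by rw [Finset.card_insert_of_notMem h, hS])
                  else 0)) := Finset.sum_congr rfl fun m _ => hfac m
            _ = ((-1 : ℝ) ^ N' * vprod N' κ S hS * Real.exp (∑ j ∈ S, theta κ j x)) *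
                ∑ m : Fin (N' + 1 + K), (B n m * (if h : m ∉ S then
                    (-1 : ℝ) ^
                        ((((insert m S).orderIsoOfFin
                              (by rw [Finset.card_insert_of_notMem h, hS])).symm
                            ⟨m, Finset.mem_insert_self m S⟩ : Fin (N' + 1)) : ℕ) *
                      minor A (insert m S) (by rw [Finset.card_insert_of_notMem h, hS])
                  else 0)) := (Finset.mul_sum _ _ _).symm
            _ = 0 := by rw [keyL0 A (fun m => B n m) hker S hS, mul_zero]
        · refine Finset.sum_eq_zero fun m _ => ?_
          rw [Phi, dif_neg (fun h : S.card = N' ∧ m ∉ S => hS h.1), mul_zero]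


end
end

section
/- Let 1 ≤ N < M, let d be a real N×(M−N) matrix, and set A = (I_N, d) and B = (−dᵀ, I_{M−N}). Then for every pair of complementary index sets J = {j₁ < ⋯ < j_N} and I = {i₁ < ⋯ < i_{M−N}} with I ∪ J = {1,…,M} and I ∩ J = ∅, the complementary minors satisfy Δ_I(B) = σ(J,I) · Δ_J(A), where σ(J,I) = (−1)^{N(N+1)/2 + j₁ + ⋯ + j_N}. -/
open Finset Matrix

noncomputable section

lemma cols_mem {M k : ℕ} (s : Finset (Fin M)) (h : s.card = k) (i : Fin k) :
    cols k s h i ∈ s := (s.orderIsoOfFin h i).2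

lemma cols_lt_iff {M k : ℕ} (s : Finset (Fin M)) (h : s.card = k) {i j : Fin k} :
    cols k s h i < cols k s h j ↔ i < j := by
  simp only [cols, ← Subtype.coe_lt_coe]
  exact (s.orderIsoOfFin h).lt_iff_lt

lemma cols_injective {M k : ℕ} (s : Finset (Fin M)) (h : s.card = k) :
    Function.Injective (cols k s h) := by
  intro i j hij
  rcases lt_trichotomy i j with h' | h' | h'
  · exact absurd ((cols_lt_iff s h).2 h') (by simp [hij])
  · exact h'
  · exact absurd ((cols_lt_iff s h).2 h') (by simp [hij])

lemma cols_surjOn {M k : ℕ} (s : Finset (Fin M)) (h : s.card = k) {x : Fin M} (hx : x ∈ s) :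
    ∃ i, cols k s h i = x :=
  ⟨(s.orderIsoOfFin h).symm ⟨x, hx⟩, by simp [cols]⟩

lemma my_sign_eq_signAux {n : ℕ} (f : Equiv.Perm (Fin n)) :
    (Equiv.Perm.sign f : ℤˣ) = Equiv.Perm.signAux f := by
  have h := Equiv.Perm.signAux_eq_signAux2 (List.finRange n) f (Equiv.refl _)
    (fun x _ => List.mem_finRange x)
  have h2 : ((Equiv.refl (Fin n)).symm.trans f).trans (Equiv.refl (Fin n)) = f := by
    ext x; simp
  rw [h2] at h
  rw [h]; exact rfl

lemma my_signAux_def {n : ℕ} (f : Equiv.Perm (Fin n)) :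
    Equiv.Perm.signAux f =
      ∏ x ∈ Finset.univ.filter (fun x : Σ _ : Fin n, Fin n => x.2 < x.1),
        if f x.1 ≤ f x.2 then (-1 : ℤˣ) else 1 := by
  unfold Equiv.Perm.signAux
  apply Finset.prod_congr _ (fun _ _ => rfl)
  ext x
  simp [Equiv.Perm.mem_finPairsLT]

/-- **duality of complementary minors.** Let `1 ≤ N < M = N + K`,
`A = (I_N, d)` and `B = (−dᵀ, I_{M−N})`. For every pair of complementary index sets
`J = {j₁ < ⋯ < j_N}` and `I = {i₁ < ⋯ < i_{M−N}}` (`I ∪ J = {1,…,M}`, `I ∩ J = ∅`),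
the complementary minors satisfy `Δ_I(B) = σ(J,I) Δ_J(A)` with
`σ(J,I) = (−1)^{N(N+1)/2 + j₁ + ⋯ + j_N}` (indices `j` being 1-based). -/
theorem complementary_minor_duality (N K : ℕ) (hN : 1 ≤ N) (hK : 1 ≤ K)
    (d : Matrix (Fin N) (Fin K) ℝ)
    (A : Matrix (Fin N) (Fin (N + K)) ℝ)
    (hA : A = (Matrix.fromCols 1 d).submatrix id finSumFinEquiv.symm)
    (B : Matrix (Fin K) (Fin (N + K)) ℝ)
    (hB : B = (Matrix.fromCols (-dᵀ) 1).submatrix id finSumFinEquiv.symm)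
    (J I : Finset (Fin (N + K))) (hJ : J.card = N) (hI : I.card = K)
    (hUnion : I ∪ J = Finset.univ) (hInter : I ∩ J = ∅) :
    (B.submatrix id (cols K I hI)).det =
      (-1 : ℝ) ^ (N * (N + 1) / 2 + ∑ j ∈ J, ((j : ℕ) + 1)) *
        (A.submatrix id (cols N J hJ)).det := by
  classical
  set e : Fin N ⊕ Fin K ≃ Fin (N + K) := finSumFinEquiv with he
  set cJ := cols N J hJ with hcJ
  set cI := cols K I hI with hcI
  -- disjointness
  have hdisj : ∀ {x y : Fin (N + K)}, x ∈ J → y ∈ I → x ≠ y := by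
    intro x y hx hy hxy
    have : y ∈ I ∩ J := Finset.mem_inter.2 ⟨hy, hxy ▸ hx⟩
    rw [hInter] at this
    exact Finset.notMem_empty y this
  -- the shuffle permutation
  have hfinj : Function.Injective (fun x : Fin (N + K) => Sum.elim cJ cI (e.symm x)) := by
    intro x y hxy
    apply e.symm.injective
    rcases hp : e.symm x with a | b <;> rcases hq : e.symm y with a' | b' <;>
      simp only [hp, hq, Sum.elim_inl, Sum.elim_inr] at hxy
    · rw [cols_injective J hJ hxy]
    · exact absurd hxy (hdisj (cols_mem J hJ a) (cols_mem I hI b'))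
    · exact absurd hxy.symm (hdisj (cols_mem J hJ a') (cols_mem I hI b))
    · rw [cols_injective I hI hxy]
  set π : Equiv.Perm (Fin (N + K)) :=
    Equiv.ofBijective _ (Finite.injective_iff_bijective.1 hfinj) with hπ
  have hπl : ∀ a : Fin N, π (e (Sum.inl a)) = cJ a := by
    intro a; simp [hπ, Equiv.ofBijective_apply]
  have hπr : ∀ b : Fin K, π (e (Sum.inr b)) = cI b := by
    intro b; simp [hπ, Equiv.ofBijective_apply]
  -- the auxiliary square matrix
  set E : Matrix (Fin (N + K)) (Fin K) ℝ := Matrix.of (fun r c => if r = cI c then 1 else 0) with hE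
  set C : Matrix (Fin N ⊕ Fin K) (Fin N ⊕ Fin K) ℝ :=
    Matrix.of (fun p q => Sum.elim (fun c => A c (e p)) (fun c => E (e p) c) q) with hC
  -- first evaluation : det C = Δ_I(B)
  have hAe : ∀ (c : Fin N) (p : Fin N ⊕ Fin K), A c (e p) = Matrix.fromCols 1 d c p := by
    intro c p; rw [hA]; simp [Matrix.submatrix_apply]
  have hCblocks : C = Matrix.fromBlocks 1
      (Matrix.of fun a c => E (e (Sum.inl a)) c) dᵀ
      (Matrix.of fun b c => E (e (Sum.inr b)) c) := by
    ext p q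
    rcases p with a | b <;> rcases q with c | c <;>
      simp only [hC, Matrix.of_apply, Sum.elim_inl, Sum.elim_inr, Matrix.fromBlocks_apply₁₁,
        Matrix.fromBlocks_apply₁₂, Matrix.fromBlocks_apply₂₁, Matrix.fromBlocks_apply₂₂, hAe,
        Matrix.fromCols_apply_inl, Matrix.fromCols_apply_inr, Matrix.transpose_apply]
    · rw [Matrix.one_apply, Matrix.one_apply]
      exact if_congr eq_comm rfl rfl
  have hdetC : C.det = (B.submatrix id cI).det := by
    rw [hCblocks, Matrix.det_fromBlocks_one₁₁]
    congr 1
    ext b c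
    rcases hp : e.symm (cI c) with s | t
    · have hcIc : cI c = e (Sum.inl s) := by rw [← hp, Equiv.apply_symm_apply]
      have h1 : E (e (Sum.inr b)) c = 0 := by
        rw [hE, Matrix.of_apply, if_neg]
        rw [hcIc]; simp [e.injective.ne_iff]
      have h2 : ∀ s' : Fin N, E (e (Sum.inl s')) c = if s' = s then 1 else 0 := by
        intro s'
        rw [hE, Matrix.of_apply, hcIc]
        simp [e.injective.eq_iff]
      rw [hB]
      simp only [Matrix.sub_apply, Matrix.mul_apply, Matrix.of_apply, h1, h2,
        Matrix.submatrix_apply, id_eq, hcIc, Equiv.symm_apply_apply,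
        Matrix.fromCols_apply_inl, Matrix.transpose_apply, Matrix.neg_apply]
      simp [mul_ite]
    · have hcIc : cI c = e (Sum.inr t) := by rw [← hp, Equiv.apply_symm_apply]
      have h1 : E (e (Sum.inr b)) c = (1 : Matrix (Fin K) (Fin K) ℝ) b t := by
        rw [hE, Matrix.of_apply, hcIc, Matrix.one_apply]
        simp [e.injective.eq_iff]
      have h2 : ∀ s' : Fin N, E (e (Sum.inl s')) c = 0 := by
        intro s'
        rw [hE, Matrix.of_apply, if_neg]
        rw [hcIc]; simp [e.injective.ne_iff]
      rw [hB]
      simp only [Matrix.sub_apply, Matrix.mul_apply, Matrix.of_apply, h1, h2,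
        Matrix.submatrix_apply, id_eq, hcIc, Equiv.symm_apply_apply,
        Matrix.fromCols_apply_inr, mul_zero, Finset.sum_const_zero]
      simp
  -- second evaluation : permuted rows give Δ_J(A)
  set τ : Equiv.Perm (Fin N ⊕ Fin K) := (Equiv.permCongr e.symm) π with hτ
  have hτe : ∀ p, e (τ p) = π (e p) := by
    intro p; simp [hτ, Equiv.permCongr_apply]
  have hDblocks : C.submatrix τ id =
      Matrix.fromBlocks (A.submatrix id cJ)ᵀ 0 (A.submatrix id cI)ᵀ 1 := by
    ext p q
    have hrow : ∀ q', C (τ p) q' = Sum.elim (fun c => A c (π (e p))) (fun c => E (π (e p)) c) q' := by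
      intro q'
      rw [hC, Matrix.of_apply, hτe]
    rcases p with a | b <;> rcases q with c | c <;>
      simp only [Matrix.submatrix_apply, id_eq, hrow, Sum.elim_inl, Sum.elim_inr, hπl, hπr,
        Matrix.fromBlocks_apply₁₁, Matrix.fromBlocks_apply₁₂, Matrix.fromBlocks_apply₂₁,
        Matrix.fromBlocks_apply₂₂, Matrix.transpose_apply, Matrix.zero_apply]
    · rw [hE, Matrix.of_apply, if_neg (hdisj (cols_mem J hJ a) (cols_mem I hI c))]
    · rw [hE, Matrix.of_apply, Matrix.one_apply]
      exact if_congr (cols_injective I hI).eq_iff rfl rfl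
  have hdetD : ((Equiv.Perm.sign π : ℤ) : ℝ) * C.det = (A.submatrix id cJ).det := by
    have := Matrix.det_permute τ C
    rw [hDblocks, Matrix.det_fromBlocks_zero₁₂, Matrix.det_one, mul_one,
      Matrix.det_transpose] at this
    have hs : Equiv.Perm.sign τ = Equiv.Perm.sign π := Equiv.Perm.sign_permCongr e.symm π
    rw [hs] at this
    exact this.symm
  -- inversion counting
  set c : Fin N → ℕ :=
    fun a => (Finset.univ.filter fun b : Fin K => cI b < cJ a).card with hc
  have hcount : ∀ a : Fin N, (a : ℕ) + c a = (cJ a : ℕ) := by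
    intro a
    have hJa : (Finset.univ.filter fun a' : Fin N => cJ a' < cJ a).card = (a : ℕ) := by
      have h1 : (Finset.univ.filter fun a' : Fin N => cJ a' < cJ a) = Finset.Iio a := by
        ext a'
        simp only [Finset.mem_filter, Finset.mem_univ, true_and, Finset.mem_Iio, hcJ]
        exact cols_lt_iff J hJ
      rw [h1, Fin.card_Iio]
    have hJb : (Finset.univ.filter fun a' : Fin N => cJ a' < cJ a).card
        = (J.filter fun x => x < cJ a).card := by
      apply Finset.card_bij (fun a' _ => cJ a')
      · intro a' ha'
        simp only [Finset.mem_filter, Finset.mem_univ, true_and] at ha' ⊢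
        exact ⟨cols_mem J hJ a', ha'⟩
      · intro a₁ _ a₂ _ h
        exact cols_injective J hJ h
      · intro x hx
        simp only [Finset.mem_filter] at hx
        obtain ⟨i, hi⟩ := cols_surjOn J hJ hx.1
        exact ⟨i, by
          simp only [Finset.mem_filter, Finset.mem_univ, true_and, hcJ, hi]
          exact hx.2, hi⟩
    have hIb : c a = (I.filter fun x => x < cJ a).card := by
      apply Finset.card_bij (fun b _ => cI b)
      · intro b hb
        simp only [Finset.mem_filter, Finset.mem_univ, true_and] at hb ⊢
        exact ⟨cols_mem I hI b, hb⟩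
      · intro b₁ _ b₂ _ h
        exact cols_injective I hI h
      · intro x hx
        simp only [Finset.mem_filter] at hx
        obtain ⟨i, hi⟩ := cols_surjOn I hI hx.1
        exact ⟨i, by
          simp only [Finset.mem_filter, Finset.mem_univ, true_and, hcI, hi]
          exact hx.2, hi⟩
    have hdisjIJ : Disjoint I J := Finset.disjoint_iff_inter_eq_empty.2 hInter
    have hdisj2 : Disjoint (I.filter fun x => x < cJ a) (J.filter fun x => x < cJ a) :=
      Finset.disjoint_filter_filter hdisjIJ
    have huf : (I.filter fun x => x < cJ a) ∪ (J.filter fun x => x < cJ a)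
        = Finset.Iio (cJ a) := by
      rw [← Finset.filter_union, hUnion]
      ext x
      simp [Finset.mem_Iio]
    have hpart : (I.filter fun x => x < cJ a).card + (J.filter fun x => x < cJ a).card
        = ((cJ a : ℕ)) := by
      rw [← Finset.card_union_of_disjoint hdisj2, huf, Fin.card_Iio]
    omega
  set X : ℕ := ∑ a : Fin N, c a with hX
  -- the sign of π
  have hsign : (Equiv.Perm.sign π : ℤˣ) = (-1) ^ X := by
    rw [my_sign_eq_signAux, my_signAux_def, Finset.prod_filter]
    have hre := Fintype.prod_equiv
      ((Equiv.prodCongr e e).trans (Equiv.sigmaEquivProd (Fin (N + K)) (Fin (N + K))).symm)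
      (fun pq : (Fin N ⊕ Fin K) × (Fin N ⊕ Fin K) =>
        if e pq.2 < e pq.1 then (if π (e pq.1) ≤ π (e pq.2) then (-1 : ℤˣ) else 1) else 1)
      (fun x : Σ _ : Fin (N + K), Fin (N + K) =>
        if x.2 < x.1 then (if π x.1 ≤ π x.2 then (-1 : ℤˣ) else 1) else 1)
      (fun pq => rfl)
    rw [← hre, Fintype.prod_prod_type]
    have hinll : ∀ a₁ a₂ : Fin N,
        (if e (Sum.inl a₂) < e (Sum.inl a₁) then
          (if π (e (Sum.inl a₁)) ≤ π (e (Sum.inl a₂)) then (-1 : ℤˣ) else 1) else 1) = 1 := by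
      intro a₁ a₂
      by_cases h : e (Sum.inl a₂) < e (Sum.inl a₁)
      · have h2 : a₂ < a₁ := by
          have h' := h
          simp only [he, finSumFinEquiv_apply_left, Fin.lt_iff_val_lt_val,
            Fin.coe_castAdd] at h'
          rw [Fin.lt_iff_val_lt_val]
          omega
        rw [if_pos h, hπl, hπl, if_neg (not_le.2 ((cols_lt_iff J hJ).2 h2))]
      · rw [if_neg h]
    have hinrr : ∀ b₁ b₂ : Fin K,
        (if e (Sum.inr b₂) < e (Sum.inr b₁) then
          (if π (e (Sum.inr b₁)) ≤ π (e (Sum.inr b₂)) then (-1 : ℤˣ) else 1) else 1) = 1 := by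
      intro b₁ b₂
      by_cases h : e (Sum.inr b₂) < e (Sum.inr b₁)
      · have h2 : b₂ < b₁ := by
          have h' := h
          simp only [he, finSumFinEquiv_apply_right, Fin.lt_iff_val_lt_val,
            Fin.coe_natAdd] at h'
          rw [Fin.lt_iff_val_lt_val]
          omega
        rw [if_pos h, hπr, hπr, if_neg (not_le.2 ((cols_lt_iff I hI).2 h2))]
      · rw [if_neg h]
    have hinlr : ∀ (a : Fin N) (b : Fin K),
        (if e (Sum.inr b) < e (Sum.inl a) then
          (if π (e (Sum.inl a)) ≤ π (e (Sum.inr b)) then (-1 : ℤˣ) else 1) else 1) = 1 := by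
      intro a b
      rw [if_neg]
      have ha := a.2
      simp only [he, finSumFinEquiv_apply_left, finSumFinEquiv_apply_right,
        Fin.lt_iff_val_lt_val, Fin.coe_castAdd, Fin.coe_natAdd, not_lt]
      omega
    have hinrl : ∀ (b : Fin K) (a : Fin N),
        (if e (Sum.inl a) < e (Sum.inr b) then
          (if π (e (Sum.inr b)) ≤ π (e (Sum.inl a)) then (-1 : ℤˣ) else 1) else 1)
        = (if cI b < cJ a then (-1 : ℤˣ) else 1) := by
      intro b a
      rw [if_pos]
      · rw [hπl, hπr]
        refine if_congr ?_ rfl rfl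
        constructor
        · intro hle
          exact lt_of_le_of_ne hle (hdisj (cols_mem J hJ a) (cols_mem I hI b)).symm
        · exact le_of_lt
      · have ha := a.2
        simp only [he, finSumFinEquiv_apply_left, finSumFinEquiv_apply_right,
          Fin.lt_iff_val_lt_val, Fin.coe_castAdd, Fin.coe_natAdd]
        omega
    rw [Fintype.prod_sum_type]
    simp only [Fintype.prod_sum_type, hinll, hinrr, hinlr, hinrl,
      Finset.prod_const_one, one_mul, mul_one]
    rw [Finset.prod_comm]
    have hpc : ∀ a : Fin N,
        (∏ b : Fin K, if cI b < cJ a then (-1 : ℤˣ) else 1) = (-1 : ℤˣ) ^ (c a) := by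
      intro a
      rw [Finset.prod_ite (fun _ => (-1 : ℤˣ)) (fun _ => (1 : ℤˣ)), Finset.prod_const,
        Finset.prod_const_one, mul_one, hc]
    rw [Finset.prod_congr rfl (fun a _ => hpc a), Finset.prod_pow_eq_pow_sum]
  have hsignR : ((Equiv.Perm.sign π : ℤ) : ℝ) = (-1 : ℝ) ^ X := by
    rw [hsign]
    push_cast
    norm_num
  -- sums
  set T : ℕ := ∑ a : Fin N, (cJ a : ℕ) with hT
  have hTX : N * (N - 1) / 2 + X = T := by
    have h1 : ∑ a : Fin N, ((a : ℕ) + c a) = T := Finset.sum_congr rfl (fun a _ => hcount a)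
    rw [Finset.sum_add_distrib] at h1
    have h2 : ∑ a : Fin N, (a : ℕ) = N * (N - 1) / 2 := by
      rw [Fin.sum_univ_eq_sum_range (fun i => i) N, Finset.sum_range_id]
    rw [h2] at h1
    exact h1

  have hsumJ : ∑ j ∈ J, ((j : ℕ) + 1) = T + N := by
    have h1 : ∑ a : Fin N, ((cJ a : ℕ) + 1) = ∑ x : {x // x ∈ J}, (((x : Fin (N + K)) : ℕ) + 1) :=
      Fintype.sum_equiv (J.orderIsoOfFin hJ).toEquiv _ _ (fun a => rfl)
    rw [Finset.sum_coe_sort J (fun j => ((j : ℕ) + 1))] at h1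
    rw [← h1, Finset.sum_add_distrib, Finset.sum_const, smul_eq_mul, mul_one,
      Finset.card_univ, Fintype.card_fin, hT]
  -- parity bookkeeping
  have hparity : (-1 : ℝ) ^ (N * (N + 1) / 2 + ∑ j ∈ J, ((j : ℕ) + 1)) = (-1 : ℝ) ^ X := by
    have heven : (X + (N * (N + 1) / 2 + (T + N))) % 2 = 0 := by
      have e1 : N * (N + 1) / 2 * 2 = N * (N + 1) := Nat.div_mul_cancel
        (Nat.even_mul_succ_self N).two_dvd
      have e2 : N * (N - 1) / 2 * 2 = N * (N - 1) := by
        apply Nat.div_mul_cancel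
        have h3 : N * (N - 1) = (N - 1) * ((N - 1) + 1) := by
          rw [Nat.sub_add_cancel hN]; ring
        rw [h3]
        exact (Nat.even_mul_succ_self (N - 1)).two_dvd
      have e3 : N * (N + 1) = N * N + N := by ring
      have e4 : N * (N - 1) = N * N - N := by
        have := Nat.mul_pred N N
        simpa using this
      have e5 : N ≤ N * N := Nat.le_mul_of_pos_left N hN
      have e6 : (N * N + N) % 2 = 0 := Nat.even_iff.1 (e3 ▸ Nat.even_mul_succ_self N)
      omega
    rw [hsumJ]
    have h7 : (-1 : ℝ) ^ X * (-1 : ℝ) ^ (X + (N * (N + 1) / 2 + (T + N))) =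
        (-1 : ℝ) ^ (N * (N + 1) / 2 + (T + N)) := by
      rw [← pow_add]
      have h8 : X + (X + (N * (N + 1) / 2 + (T + N))) =
          (N * (N + 1) / 2 + (T + N)) + 2 * X := by ring
      rw [h8, pow_add, pow_mul]
      norm_num
    rw [← h7, Nat.even_iff.2 heven |>.neg_one_pow, mul_one]
  -- final assembly
  rw [hparity]
  have hfin : (-1 : ℝ) ^ X * (B.submatrix id cI).det = (A.submatrix id cJ).det := by
    rw [← hsignR, ← hdetC]
    exact hdetD
  calc (B.submatrix id cI).det
      = ((-1 : ℝ) ^ X * (-1 : ℝ) ^ X) * (B.submatrix id cI).det := by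
        rw [← pow_add]
        have h9 : X + X = 2 * X := by ring
        rw [h9, pow_mul]
        norm_num
    _ = (-1 : ℝ) ^ X * ((-1 : ℝ) ^ X * (B.submatrix id cI).det) := by ring
    _ = (-1 : ℝ) ^ X * (A.submatrix id cJ).det := by rw [hfin]

end
end

section
/- Let 1 ≤ N < M, let κ₁ < ⋯ < κ_M be nonzero real numbers, and let A be a real N×M matrix of rank N. For j ∈ {1,…,M} define φ_j(x) = exp(θ_j(x)) · [Σ_J Δ_J(A) · ∏_{k=1}^{N}(1 − κ_{j_k}/κ_j) · E_J(x)] / τ(x) and ψ_j(x) = exp(−θ_j(x)) · (κ_j^N / τ(x)) · Σ_{J ∋ j} Δ_J(A) · E_J(x) / ∏_{k ∈ J∖{j}} (κ_j − κ_k), where the first sum runs over all N-element index sets J ⊆ {1,…,M} and the second over those containing j. Then for all x, x′ ∈ ℝ³ with τ(x) ≠ 0 and τ(x′) ≠ 0, the orthogonality relation Σ_{j=1}^{M} φ_j(x) ψ_j(x′) = 0 holds. -/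
open Finset

noncomputable section

/-- `E_J(x) = ∏_{l<m} (κ_{j_m} − κ_{j_l}) · exp(θ_{j₁}(x) + ⋯ + θ_{j_N}(x))`. -/
def EJ {M : ℕ} (N : ℕ) (κ : Fin M → ℝ) (s : Finset (Fin M)) (h : s.card = N)
    (x : Fin 3 → ℝ) : ℝ :=
  (∏ p ∈ Finset.univ.filter (fun p : Fin N × Fin N => p.1 < p.2),
      (κ (cols N s h p.2) - κ (cols N s h p.1))) *
    Real.exp (∑ j ∈ s, theta κ j x)

/-- The tau function `τ(x) = Σ_J Δ_J(A) E_J(x)`. -/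
def tau {N M : ℕ} (κ : Fin M → ℝ) (A : Matrix (Fin N) (Fin M) ℝ) (x : Fin 3 → ℝ) : ℝ :=
  ∑ s : {s : Finset (Fin M) // s.card = N}, minor A s.1 s.2 * EJ N κ s.1 s.2 x

/-- Value of the Sato eigenfunction at `κ_j`:
`φ_j(x) = e^{θ_j(x)} [Σ_J Δ_J(A) ∏_{k=1}^N (1 − κ_{j_k}/κ_j) E_J(x)] / τ(x)`. -/
def phi {N M : ℕ} (κ : Fin M → ℝ) (A : Matrix (Fin N) (Fin M) ℝ) (j : Fin M)
    (x : Fin 3 → ℝ) : ℝ :=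
  Real.exp (theta κ j x) *
    (∑ s : {s : Finset (Fin M) // s.card = N},
      minor A s.1 s.2 * (∏ k : Fin N, (1 - κ (cols N s.1 s.2 k) / κ j)) * EJ N κ s.1 s.2 x) /
    tau κ A x

/-- Residue of the Sato adjoint eigenfunction at `κ_j`:
`ψ_j(x) = e^{−θ_j(x)} (κ_j^N/τ(x)) Σ_{J ∋ j} Δ_J(A) E_J(x) / ∏_{k∈J∖{j}} (κ_j − κ_k)`. -/
def psi {N M : ℕ} (κ : Fin M → ℝ) (A : Matrix (Fin N) (Fin M) ℝ) (j : Fin M)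
    (x : Fin 3 → ℝ) : ℝ :=
  Real.exp (-(theta κ j x)) * (κ j ^ N / tau κ A x) *
    ∑ s : {s : Finset (Fin M) // s.card = N ∧ j ∈ s},
      minor A s.1 s.2.1 * EJ N κ s.1 s.2.1 x / ∏ k ∈ s.1.erase j, (κ j - κ k)

/-! ### Auxiliary machinery for the orthogonality relation -/

section OrthoAux

variable {M : ℕ}

/-- Set-level Vandermonde product. -/
def Vd (κ : Fin M → ℝ) (s : Finset (Fin M)) : ℝ :=
  ∏ q ∈ (s ×ˢ s).filter (fun q => q.1 < q.2), (κ q.2 - κ q.1)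

/-- Proof-irrelevant version of `minor`. -/
def md {N : ℕ} (A : Matrix (Fin N) (Fin M) ℝ) (s : Finset (Fin M)) : ℝ :=
  if h : s.card = N then minor A s h else 0

/-- The determinant with column `j` prepended to the columns enumerated by `U`. -/
def Dd {n : ℕ} (A : Matrix (Fin (n + 1)) (Fin M) ℝ) (U : Finset (Fin M)) (j : Fin M) : ℝ :=
  if h : U.card = n then (A.submatrix id (Fin.cons j (⇑(U.orderEmbOfFin h)))).det else 0

lemma cols_eq_emb {k : ℕ} (s : Finset (Fin M)) (h : s.card = k) :
    cols k s h = ⇑(s.orderEmbOfFin h) :=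
  funext fun i => s.coe_orderIsoOfFin_apply h i

lemma minor_eq_md {N : ℕ} (A : Matrix (Fin N) (Fin M) ℝ) (s : Finset (Fin M))
    (h : s.card = N) : minor A s h = md A s := (dif_pos h).symm

lemma prod_colsAux {k : ℕ} (s : Finset (Fin M)) (h : s.card = k) (f : Fin M → ℝ) :
    ∏ i : Fin k, f (s.orderEmbOfFin h i) = ∏ a ∈ s, f a := by
  rw [← Finset.prod_coe_sort s f]
  exact Fintype.prod_equiv (s.orderIsoOfFin h).toEquiv _ _ (fun i => rfl)

lemma sum_colsAux {k : ℕ} (s : Finset (Fin M)) (h : s.card = k) (f : Fin M → ℝ) :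
    ∑ i : Fin k, f (s.orderEmbOfFin h i) = ∑ a ∈ s, f a := by
  rw [← Finset.sum_coe_sort s f]
  exact Fintype.sum_equiv (s.orderIsoOfFin h).toEquiv _ _ (fun i => rfl)

lemma vd_eq {M k : ℕ} (κ : Fin M → ℝ) (s : Finset (Fin M)) (h : s.card = k) :
    (∏ p ∈ Finset.univ.filter (fun p : Fin k × Fin k => p.1 < p.2),
      (κ (s.orderEmbOfFin h p.2) - κ (s.orderEmbOfFin h p.1))) = Vd κ s := by
  refine Finset.prod_bij (fun p _ => ((s.orderEmbOfFin h p.1 : Fin M), (s.orderEmbOfFin h p.2 : Fin M))) ?_ ?_ ?_ ?_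
  · rintro ⟨a, b⟩ hp
    simp only [mem_filter, mem_univ, true_and] at hp ⊢
    exact ⟨mem_product.2 ⟨s.orderEmbOfFin_mem h a, s.orderEmbOfFin_mem h b⟩,
      (s.orderEmbOfFin h).strictMono hp⟩
  · rintro ⟨a, b⟩ _ ⟨c, d⟩ _ he
    simp only [Prod.mk.injEq] at he
    have := (s.orderEmbOfFin h).injective he.1
    have := (s.orderEmbOfFin h).injective he.2
    simp_all
  · rintro ⟨a, b⟩ hq
    simp only [mem_filter, mem_product] at hq
    obtain ⟨⟨ha, hb⟩, hab⟩ := hq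
    refine ⟨((s.orderIsoOfFin h).symm ⟨a, ha⟩, (s.orderIsoOfFin h).symm ⟨b, hb⟩), ?_, ?_⟩
    · simp only [mem_filter, mem_univ, true_and]
      rw [← OrderIso.lt_iff_lt (s.orderIsoOfFin h)]
      simp only [OrderIso.apply_symm_apply]; exact hab
    · have e1 : (s.orderEmbOfFin h) ((s.orderIsoOfFin h).symm ⟨a, ha⟩) = a := by
        rw [← Finset.coe_orderIsoOfFin_apply]; simp
      have e2 : (s.orderEmbOfFin h) ((s.orderIsoOfFin h).symm ⟨b, hb⟩) = b := by
        rw [← Finset.coe_orderIsoOfFin_apply]; simp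
      simp [e1, e2]
  · rintro ⟨a, b⟩ _; rfl


lemma EJ_eq {k : ℕ} (κ : Fin M → ℝ) (s : Finset (Fin M)) (h : s.card = k) (x : Fin 3 → ℝ) :
    EJ k κ s h x = Vd κ s * Real.exp (∑ j ∈ s, theta κ j x) := by
  rw [EJ, cols_eq_emb, vd_eq]

lemma vd_insert {M : ℕ} (κ : Fin M → ℝ) {s : Finset (Fin M)} {j : Fin M} (hj : j ∉ s) :
    (∏ k ∈ s, (κ j - κ k)) * Vd κ s
      = (-1 : ℝ) ^ ((s.filter (fun k => j < k)).card) * Vd κ (insert j s) := by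
  classical
  have hset : ((insert j s) ×ˢ (insert j s)).filter (fun q => q.1 < q.2)
      = ((s.filter (fun k => k < j)).image (fun k => (k, j))) ∪
        (((s.filter (fun k => j < k)).image (fun k => (j, k))) ∪
          (s ×ˢ s).filter (fun q => q.1 < q.2)) := by
    ext ⟨a, b⟩
    simp only [mem_filter, mem_product, mem_insert, mem_union, mem_image, Prod.mk.injEq]
    constructor
    · rintro ⟨⟨ha | ha, hb | hb⟩, hab⟩
      · exact absurd (ha ▸ hb ▸ hab) (lt_irrefl _)
      · exact Or.inr (Or.inl ⟨b, ⟨hb, ha ▸ hab⟩, ha.symm, rfl⟩)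
      · exact Or.inl ⟨a, ⟨ha, hb ▸ hab⟩, rfl, hb.symm⟩
      · exact Or.inr (Or.inr ⟨⟨ha, hb⟩, hab⟩)
    · rintro (⟨k, ⟨hk, hkj⟩, rfl, rfl⟩ | ⟨k, ⟨hk, hkj⟩, rfl, rfl⟩ | ⟨⟨ha, hb⟩, hab⟩)
      · exact ⟨⟨Or.inr hk, Or.inl rfl⟩, hkj⟩
      · exact ⟨⟨Or.inl rfl, Or.inr hk⟩, hkj⟩
      · exact ⟨⟨Or.inr ha, Or.inr hb⟩, hab⟩
  have hdisj1 : Disjoint ((s.filter (fun k => k < j)).image (fun k => (k, j)))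
      (((s.filter (fun k => j < k)).image (fun k => (j, k))) ∪
        (s ×ˢ s).filter (fun q => q.1 < q.2)) := by
    rw [disjoint_left]
    rintro ⟨a, b⟩ hab1 hab2
    simp only [mem_image, mem_filter, mem_union, mem_product, Prod.mk.injEq] at hab1 hab2
    obtain ⟨k, ⟨hk, hkj⟩, rfl, rfl⟩ := hab1
    rcases hab2 with ⟨k', ⟨hk', hkj'⟩, h1, h2⟩ | ⟨⟨ha, hb⟩, hab⟩
    · exact hj (h1 ▸ hk)
    · exact hj hb
  have hdisj2 : Disjoint ((s.filter (fun k => j < k)).image (fun k => (j, k)))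
      ((s ×ˢ s).filter (fun q => q.1 < q.2)) := by
    rw [disjoint_left]
    rintro ⟨a, b⟩ hab1 hab2
    simp only [mem_image, mem_filter, mem_product, Prod.mk.injEq] at hab1 hab2
    obtain ⟨k, ⟨hk, hkj⟩, rfl, rfl⟩ := hab1
    exact hj hab2.1.1
  have hinj1 : Set.InjOn (fun k => ((k : Fin M), j)) (s.filter (fun k => k < j)) := by
    intro a _ b _ h; simpa using h
  have hinj2 : Set.InjOn (fun k => (j, (k : Fin M))) (s.filter (fun k => j < k)) := by
    intro a _ b _ h; simpa using h
  rw [Vd, Vd, hset, prod_union hdisj1, prod_union hdisj2, prod_image hinj1, prod_image hinj2]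
  have h2 : ∏ k ∈ s.filter (fun k => j < k), (κ k - κ j)
      = (-1 : ℝ) ^ ((s.filter (fun k => j < k)).card) * ∏ k ∈ s.filter (fun k => j < k), (κ j - κ k) := by
    rw [← prod_const, ← prod_mul_distrib]
    exact prod_congr rfl (fun k _ => by ring)
  have h3 : (∏ k ∈ s.filter (fun k => k < j), (κ j - κ k)) *
      (∏ k ∈ s.filter (fun k => j < k), (κ j - κ k)) = ∏ k ∈ s, (κ j - κ k) := by
    rw [← prod_filter_mul_prod_filter_not s (fun k => k < j)]
    congr 1
    exact prod_congr (filter_congr (fun k hk => by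
      have hne : k ≠ j := fun h => hj (h ▸ hk)
      have hne' : (k : ℕ) ≠ (j : ℕ) := fun h => hne (Fin.ext h)
      simp only [not_lt, Fin.lt_def, Fin.le_def]
      omega)) (fun _ _ => rfl)
  have hVds : (∏ q ∈ (s ×ˢ s).filter (fun q => q.1 < q.2), (κ q.2 - κ q.1)) = Vd κ s := rfl
  rw [h2, ← h3, hVds]
  have hcc : (-1 : ℝ) ^ ((s.filter (fun k => j < k)).card) *
      (-1 : ℝ) ^ ((s.filter (fun k => j < k)).card) = 1 := by
    rw [← pow_add, ← two_mul, pow_mul]; norm_num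
  linear_combination (-1 * ((∏ k ∈ s.filter (fun k => k < j), (κ j - κ k)) *
    (∏ k ∈ s.filter (fun k => j < k), (κ j - κ k)) * Vd κ s)) * hcc


lemma cols_erase {m : ℕ} (W : Finset (Fin M)) (h : W.card = m + 1) (q : Fin (m + 1))
    (h' : (W.erase (W.orderEmbOfFin h q)).card = m) :
    ⇑((W.erase (W.orderEmbOfFin h q)).orderEmbOfFin h')
      = fun r => W.orderEmbOfFin h (q.succAbove r) := by
  refine (Finset.orderEmbOfFin_unique h' (fun r => ?_) ?_).symm
  · exact mem_erase.2 ⟨(W.orderEmbOfFin h).injective.ne (q.succAbove_ne r),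
      W.orderEmbOfFin_mem h _⟩
  · exact (W.orderEmbOfFin h).strictMono.comp (Fin.strictMono_succAbove q)


lemma card_filter_lt_emb {m : ℕ} (W : Finset (Fin M)) (h : W.card = m) (q : Fin m) :
    #(W.filter (fun k => k < W.orderEmbOfFin h q)) = (q : ℕ) := by
  have himg : W.filter (fun k => k < W.orderEmbOfFin h q)
      = (Finset.univ.filter (fun r : Fin m => r < q)).image (W.orderEmbOfFin h) := by
    ext k
    simp only [mem_filter, mem_image, mem_univ, true_and]
    constructor
    · rintro ⟨hk, hlt⟩
      have : k ∈ Set.range (W.orderEmbOfFin h) := by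
        rw [Finset.range_orderEmbOfFin]; exact hk
      obtain ⟨r, rfl⟩ := this
      exact ⟨r, (W.orderEmbOfFin h).lt_iff_lt.1 hlt, rfl⟩
    · rintro ⟨r, hr, rfl⟩
      exact ⟨W.orderEmbOfFin_mem h r, (W.orderEmbOfFin h).lt_iff_lt.2 hr⟩
  rw [himg, Finset.card_image_of_injective _ (W.orderEmbOfFin h).injective]
  have : Finset.univ.filter (fun r : Fin m => r < q) = Finset.Iio q := by
    ext r; simp
  rw [this, Fin.card_Iio]


lemma det_cons_eq_sign_minor {m : ℕ} (A : Matrix (Fin (m + 1)) (Fin M) ℝ)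
    (U : Finset (Fin M)) (hU : U.card = m) (j : Fin M) (hj : j ∉ U)
    (hW : (insert j U).card = m + 1) :
    (A.submatrix id (Fin.cons j (⇑(U.orderEmbOfFin hU)))).det
      = (-1 : ℝ) ^ (#(U.filter (fun k => k < j)))
        * (A.submatrix id (⇑((insert j U).orderEmbOfFin hW))).det := by
  classical
  set W := insert j U with hWdef
  set p : Fin (m + 1) := (W.orderIsoOfFin hW).symm ⟨j, mem_insert_self j U⟩ with hp
  have hpj : W.orderEmbOfFin hW p = j := by
    rw [← Finset.coe_orderIsoOfFin_apply, hp, OrderIso.apply_symm_apply]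
  have herase : W.erase (W.orderEmbOfFin hW p) = U := by rw [hpj, hWdef, erase_insert hj]
  have hcard' : (W.erase (W.orderEmbOfFin hW p)).card = m := by rw [herase]; exact hU
  have hcolsU : ⇑(U.orderEmbOfFin hU) = fun r => W.orderEmbOfFin hW (p.succAbove r) := by
    refine (Finset.orderEmbOfFin_unique hU (fun r => ?_) ?_).symm
    · have : W.orderEmbOfFin hW (p.succAbove r) ∈ W.erase (W.orderEmbOfFin hW p) :=
        mem_erase.2 ⟨(W.orderEmbOfFin hW).injective.ne (p.succAbove_ne r),
          W.orderEmbOfFin_mem hW _⟩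
      rwa [herase] at this
    · exact (W.orderEmbOfFin hW).strictMono.comp (Fin.strictMono_succAbove p)
  have hfun : (Fin.cons j (⇑(U.orderEmbOfFin hU)) : Fin (m + 1) → Fin M)
      = fun k => W.orderEmbOfFin hW (p.cycleRange.symm k) := by
    funext k
    refine Fin.cases ?_ (fun r => ?_) k
    · rw [Fin.cons_zero, Fin.cycleRange_symm_zero, hpj]
    · rw [Fin.cons_succ, Fin.cycleRange_symm_succ, hcolsU]
  have hsub : A.submatrix id (Fin.cons j (⇑(U.orderEmbOfFin hU)))
      = (A.submatrix id (⇑(W.orderEmbOfFin hW))).submatrix id ⇑(p.cycleRange.symm) := by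
    rw [hfun]; rfl
  rw [hsub, Matrix.det_permute' (p.cycleRange.symm : Equiv.Perm (Fin (m+1)))]
  have hsign : (Equiv.Perm.sign (p.cycleRange.symm : Equiv.Perm (Fin (m+1))) : ℝ)
      = (-1 : ℝ) ^ (p : ℕ) := by
    rw [Equiv.Perm.sign_symm, Fin.sign_cycleRange]
    norm_num
  have hpval : (p : ℕ) = #(U.filter (fun k => k < j)) := by
    have := card_filter_lt_emb W hW p
    rw [hpj] at this
    rw [← this, hWdef, filter_insert, if_neg (lt_irrefl j)]
  rw [hsign, hpval]


lemma pluecker {m M : ℕ} (A : Matrix (Fin (m + 1)) (Fin M) ℝ) (u : Fin m → Fin M)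
    (g : Fin (m + 2) → Fin M) :
    ∑ q : Fin (m + 2), (-1 : ℝ) ^ (q : ℕ) * (A.submatrix id (Fin.cons (g q) u)).det *
      (A.submatrix id (fun r => g (q.succAbove r))).det = 0 := by
  have hexp : ∀ jcol : Fin M, (A.submatrix id (Fin.cons jcol u)).det
      = ∑ i : Fin (m + 1), (-1 : ℝ) ^ (i : ℕ) * A i jcol * (A.submatrix i.succAbove u).det := by
    intro jcol
    rw [Matrix.det_succ_column_zero]
    refine Finset.sum_congr rfl fun i _ => ?_
    simp only [Matrix.submatrix_apply, id_eq, Fin.cons_zero]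
    have hsm2 : (A.submatrix id (Fin.cons jcol u)).submatrix i.succAbove Fin.succ
        = A.submatrix i.succAbove u := by
      ext r c
      simp [Matrix.submatrix_apply, Fin.cons_succ]
    rw [hsm2]
  simp only [hexp]
  simp only [Finset.sum_mul, Finset.mul_sum]
  rw [Finset.sum_comm]
  refine Finset.sum_eq_zero fun i _ => ?_
  have hB : ∑ q : Fin (m + 2), (-1 : ℝ) ^ (q : ℕ) * A i (g q) *
      (A.submatrix id (fun r => g (q.succAbove r))).det = 0 := by
    set B : Matrix (Fin (m + 2)) (Fin (m + 2)) ℝ :=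
      Matrix.of (fun q l => Fin.cases (A i (g q)) (fun l' => A l' (g q)) l) with hBdef
    have hB0 : B.det = 0 := by
      refine Matrix.det_zero_of_column_eq (show (0 : Fin (m + 2)) ≠ i.succ from
        (Fin.succ_ne_zero i).symm) (fun q => ?_)
      simp [hBdef]
    have hBexp : B.det = ∑ q : Fin (m + 2), (-1 : ℝ) ^ (q : ℕ) * A i (g q) *
        (A.submatrix id (fun r => g (q.succAbove r))).det := by
      rw [Matrix.det_succ_column_zero]
      refine Finset.sum_congr rfl fun q _ => ?_
      have hsm : B.submatrix q.succAbove Fin.succ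
          = (A.submatrix id (fun r => g (q.succAbove r))).transpose := by
        ext r l
        simp [hBdef, Matrix.submatrix_apply, Matrix.transpose_apply]
      rw [hsm, Matrix.det_transpose]
      congr 2
    rw [← hBexp, hB0]
  calc ∑ q : Fin (m + 2), (-1 : ℝ) ^ (q : ℕ) *
        ((-1 : ℝ) ^ (i : ℕ) * A i (g q) * (A.submatrix i.succAbove u).det) *
        (A.submatrix id (fun r => g (q.succAbove r))).det
      = ((-1 : ℝ) ^ (i : ℕ) * (A.submatrix i.succAbove u).det) *
        ∑ q : Fin (m + 2), (-1 : ℝ) ^ (q : ℕ) * A i (g q) *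
          (A.submatrix id (fun r => g (q.succAbove r))).det := by
        rw [Finset.mul_sum]
        exact Finset.sum_congr rfl fun q _ => by ring
    _ = 0 := by rw [hB, mul_zero]


lemma card_filter_lt_add_gt {W : Finset (Fin M)} {j : Fin M} (hj : j ∈ W) :
    #(W.filter (fun k => k < j)) + #(W.filter (fun k => j < k)) + 1 = #W := by
  classical
  have h1 : #(W.filter (fun k => k < j)) + #(W.filter (fun k => ¬ k < j)) = #W :=
    Finset.card_filter_add_card_filter_not _
  have h2 : W.filter (fun k => ¬ k < j) = insert j (W.filter (fun k => j < k)) := by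
    ext k
    simp only [mem_filter, mem_insert, not_lt]
    constructor
    · rintro ⟨hk, hle⟩
      rcases eq_or_lt_of_le hle with h | h
      · exact Or.inl h.symm
      · exact Or.inr ⟨hk, h⟩
    · rintro (rfl | ⟨hk, hlt⟩)
      · exact ⟨hj, le_refl _⟩
      · exact ⟨hk, hlt.le⟩
  have h3 : j ∉ W.filter (fun k => j < k) := by simp
  rw [h2, Finset.card_insert_of_notMem h3] at h1
  omega

lemma Dd_eq_zero_of_mem {n : ℕ} (A : Matrix (Fin (n + 1)) (Fin M) ℝ)
    {U : Finset (Fin M)} {j : Fin M} (hj : j ∈ U) : Dd A U j = 0 := by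
  rw [Dd]
  split
  · next h =>
    set r : Fin n := (U.orderIsoOfFin h).symm ⟨j, hj⟩ with hr
    have hrj : U.orderEmbOfFin h r = j := by
      rw [← Finset.coe_orderIsoOfFin_apply, hr, OrderIso.apply_symm_apply]
    refine Matrix.det_zero_of_column_eq (show (0 : Fin (n + 1)) ≠ r.succ from
      (Fin.succ_ne_zero r).symm) (fun i => ?_)
    simp [Matrix.submatrix_apply, Fin.cons_succ, hrj]
  · rfl

lemma phi_step {n : ℕ} (κ : Fin M → ℝ) (hκ0 : ∀ j, κ j ≠ 0)
    (A : Matrix (Fin (n + 1)) (Fin M) ℝ) (j : Fin M) (x : Fin 3 → ℝ) :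
    Real.exp (theta κ j x) * (κ j ^ (n + 1) *
      ∑ s : {s : Finset (Fin M) // s.card = n + 1},
        minor A s.1 s.2 * (∏ k : Fin (n + 1), (1 - κ (cols (n + 1) s.1 s.2 k) / κ j)) *
          EJ (n + 1) κ s.1 s.2 x)
    = ∑ W ∈ (Finset.univ.powersetCard (n + 2)).filter (fun W => j ∈ W),
        (-1 : ℝ) ^ (#(W.filter (fun k => j < k))) * md A (W.erase j) *
          (Vd κ W * Real.exp (∑ k ∈ W, theta κ k x)) := by
  classical
  have hsub : (∑ s : {s : Finset (Fin M) // s.card = n + 1},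
      minor A s.1 s.2 * (∏ k : Fin (n + 1), (1 - κ (cols (n + 1) s.1 s.2 k) / κ j)) *
        EJ (n + 1) κ s.1 s.2 x)
      = ∑ s ∈ Finset.univ.powersetCard (n + 1),
          md A s * (∏ a ∈ s, (1 - κ a / κ j)) * (Vd κ s * Real.exp (∑ k ∈ s, theta κ k x)) := by
    refine Eq.trans (Fintype.sum_congr _ _ (fun s => ?_))
      (Finset.sum_subtype _ (fun s => Finset.mem_powersetCard_univ) _).symm
    rw [minor_eq_md, EJ_eq, cols_eq_emb, prod_colsAux s.1 s.2 (fun a => 1 - κ a / κ j)]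
  rw [hsub, Finset.mul_sum, Finset.mul_sum]
  rw [← Finset.sum_filter_add_sum_filter_not (Finset.univ.powersetCard (n + 1))
      (fun s => j ∈ s)]
  have hzero : ∑ s ∈ (Finset.univ.powersetCard (n + 1)).filter (fun s => j ∈ s),
      Real.exp (theta κ j x) * (κ j ^ (n + 1) *
        (md A s * (∏ a ∈ s, (1 - κ a / κ j)) * (Vd κ s * Real.exp (∑ k ∈ s, theta κ k x))))
      = 0 := by
    refine Finset.sum_eq_zero fun s hs => ?_
    have hjs : j ∈ s := (Finset.mem_filter.1 hs).2
    have : (∏ a ∈ s, (1 - κ a / κ j)) = 0 :=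
      Finset.prod_eq_zero hjs (by rw [div_self (hκ0 j), sub_self])
    rw [this]; ring
  rw [hzero, zero_add]
  refine Finset.sum_nbij' (i := fun s => insert j s) (j := fun W => W.erase j)
    ?_ ?_ ?_ ?_ ?_
  · intro s hs
    simp only [Finset.mem_filter, Finset.mem_powersetCard_univ] at hs ⊢
    exact ⟨by rw [Finset.card_insert_of_notMem hs.2, hs.1], Finset.mem_insert_self j s⟩
  · intro W hW
    simp only [Finset.mem_filter, Finset.mem_powersetCard_univ] at hW ⊢
    constructor
    · rw [Finset.card_erase_of_mem hW.2, hW.1]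
      omega
    · exact fun h => (Finset.notMem_erase j W) h
  · intro s hs
    exact Finset.erase_insert (Finset.mem_filter.1 hs).2
  · intro W hW
    exact Finset.insert_erase (Finset.mem_filter.1 hW).2
  · intro s hs
    simp only [Finset.mem_filter, Finset.mem_powersetCard_univ] at hs
    obtain ⟨hcard, hjs⟩ := hs
    have h1 : κ j ^ (n + 1) * ∏ a ∈ s, (1 - κ a / κ j) = ∏ a ∈ s, (κ j - κ a) := by
      rw [← hcard, ← Finset.prod_const (κ j), ← Finset.prod_mul_distrib]
      exact Finset.prod_congr rfl fun a _ => by field_simp [hκ0 j]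
    have h2 := vd_insert κ hjs
    have h3 : Real.exp (theta κ j x) * Real.exp (∑ k ∈ s, theta κ k x)
        = Real.exp (∑ k ∈ insert j s, theta κ k x) := by
      rw [← Real.exp_add, Finset.sum_insert hjs]
    rw [Finset.erase_insert hjs, Finset.filter_insert, if_neg (lt_irrefl j)]
    calc Real.exp (theta κ j x) * (κ j ^ (n + 1) *
          (md A s * (∏ a ∈ s, (1 - κ a / κ j)) * (Vd κ s * Real.exp (∑ k ∈ s, theta κ k x))))
        = md A s * ((κ j ^ (n + 1) * ∏ a ∈ s, (1 - κ a / κ j)) * Vd κ s) *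
            (Real.exp (theta κ j x) * Real.exp (∑ k ∈ s, theta κ k x)) := by ring
      _ = md A s * ((∏ a ∈ s, (κ j - κ a)) * Vd κ s) *
            (Real.exp (theta κ j x) * Real.exp (∑ k ∈ s, theta κ k x)) := by rw [h1]
      _ = md A s * ((-1 : ℝ) ^ (#(s.filter (fun k => j < k))) * Vd κ (insert j s)) *
            (Real.exp (∑ k ∈ insert j s, theta κ k x)) := by rw [h2, h3]
      _ = (-1 : ℝ) ^ (#(s.filter (fun k => j < k))) * md A s *
            (Vd κ (insert j s) * Real.exp (∑ k ∈ insert j s, theta κ k x)) := by ring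


lemma psi_step {n : ℕ} (κ : Fin M → ℝ) (hκ : StrictMono κ)
    (A : Matrix (Fin (n + 1)) (Fin M) ℝ) (j : Fin M) (x' : Fin 3 → ℝ) :
    Real.exp (-(theta κ j x')) *
      (∑ s : {s : Finset (Fin M) // s.card = n + 1 ∧ j ∈ s},
        minor A s.1 s.2.1 * EJ (n + 1) κ s.1 s.2.1 x' / ∏ k ∈ s.1.erase j, (κ j - κ k))
    = (-1 : ℝ) ^ n * ∑ U ∈ Finset.univ.powersetCard n,
        Dd A U j * (Vd κ U * Real.exp (∑ k ∈ U, theta κ k x')) := by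
  classical
  have hsub : (∑ s : {s : Finset (Fin M) // s.card = n + 1 ∧ j ∈ s},
      minor A s.1 s.2.1 * EJ (n + 1) κ s.1 s.2.1 x' / ∏ k ∈ s.1.erase j, (κ j - κ k))
      = ∑ T ∈ (Finset.univ.powersetCard (n + 1)).filter (fun T => j ∈ T),
          md A T * (Vd κ T * Real.exp (∑ k ∈ T, theta κ k x'))
            / ∏ k ∈ T.erase j, (κ j - κ k) := by
    refine Eq.trans (Fintype.sum_congr _ _ (fun s => ?_))
      (Finset.sum_subtype _ (fun s => ?_) _).symm
    · rw [minor_eq_md, EJ_eq]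
    · simp [Finset.mem_filter, Finset.mem_powersetCard_univ, and_comm]
  rw [hsub, Finset.mul_sum, Finset.mul_sum]
  rw [← Finset.sum_filter_add_sum_filter_not (Finset.univ.powersetCard n)
      (fun U => j ∈ U)]
  have hzero : ∑ U ∈ (Finset.univ.powersetCard n).filter (fun U => j ∈ U),
      (-1 : ℝ) ^ n * (Dd A U j * (Vd κ U * Real.exp (∑ k ∈ U, theta κ k x'))) = 0 := by
    refine Finset.sum_eq_zero fun U hU => ?_
    rw [Dd_eq_zero_of_mem A (Finset.mem_filter.1 hU).2]
    ring
  rw [hzero, zero_add]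
  refine Finset.sum_nbij' (i := fun T => T.erase j) (j := fun U => insert j U)
    ?_ ?_ ?_ ?_ ?_
  · intro T hT
    simp only [Finset.mem_filter, Finset.mem_powersetCard_univ] at hT ⊢
    exact ⟨by rw [Finset.card_erase_of_mem hT.2, hT.1]; omega,
      fun h => Finset.notMem_erase j T h⟩
  · intro U hU
    simp only [Finset.mem_filter, Finset.mem_powersetCard_univ] at hU ⊢
    exact ⟨by rw [Finset.card_insert_of_notMem hU.2, hU.1], Finset.mem_insert_self j U⟩
  · intro T hT
    exact Finset.insert_erase (Finset.mem_filter.1 hT).2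
  · intro U hU
    exact Finset.erase_insert (Finset.mem_filter.1 hU).2
  · intro T hT
    simp only [Finset.mem_filter, Finset.mem_powersetCard_univ] at hT
    obtain ⟨hTcard, hjT⟩ := hT
    set U : Finset (Fin M) := T.erase j with hUdef
    have hjU : j ∉ U := Finset.notMem_erase j T
    have hins : insert j U = T := Finset.insert_erase hjT
    have hUcard : U.card = n := by
      rw [hUdef, Finset.card_erase_of_mem hjT, hTcard]
      omega
    have hprodne : (∏ k ∈ U, (κ j - κ k)) ≠ 0 := by
      refine Finset.prod_ne_zero_iff.2 fun k hk => sub_ne_zero.2 ?_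
      exact fun he => (Finset.mem_erase.1 hk).1 (hκ.injective he).symm
    have hsq : ∀ c : ℕ, (-1 : ℝ) ^ c * (-1 : ℝ) ^ c = 1 := by
      intro c; rw [← pow_add, ← two_mul, pow_mul]; norm_num
    -- Vandermonde
    have hvd := vd_insert κ hjU
    rw [hins] at hvd
    have hVdT : Vd κ T
        = (-1 : ℝ) ^ (#(U.filter (fun k => j < k))) * ((∏ k ∈ U, (κ j - κ k)) * Vd κ U) := by
      rw [hvd, ← mul_assoc, hsq, one_mul]
    -- minor
    have hWcard : (insert j U).card = n + 1 := by rw [hins]; exact hTcard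
    have hdet := det_cons_eq_sign_minor A U hUcard j hjU hWcard
    have hmd1 : md A T = (A.submatrix id (⇑((insert j U).orderEmbOfFin hWcard))).det := by
      conv_lhs => rw [← hins]
      rw [← minor_eq_md A (insert j U) hWcard, minor, cols_eq_emb]
    have hDd : Dd A U j = (-1 : ℝ) ^ (#(U.filter (fun k => k < j))) * md A T := by
      rw [Dd, dif_pos hUcard, hdet, hmd1]
    have hmdT : md A T = (-1 : ℝ) ^ (#(U.filter (fun k => k < j))) * Dd A U j := by
      rw [hDd, ← mul_assoc, hsq, one_mul]
    -- counting
    have hcnt : #(U.filter (fun k => k < j)) + #(U.filter (fun k => j < k)) = n := by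
      have h1 : #(U.filter (fun k => k < j)) + #(U.filter (fun k => ¬ k < j)) = #U :=
        Finset.card_filter_add_card_filter_not _
      have h2 : U.filter (fun k => ¬ k < j) = U.filter (fun k => j < k) := by
        refine Finset.filter_congr fun k hk => ?_
        have hne : k ≠ j := (Finset.mem_erase.1 hk).1
        simp only [not_lt, eq_iff_iff]
        exact ⟨fun h => lt_of_le_of_ne h hne.symm, fun h => h.le⟩
      rw [h2] at h1
      rw [h1, hUcard]
    -- exponentials
    have h0 : (∑ k ∈ T, theta κ k x') = theta κ j x' + ∑ k ∈ U, theta κ k x' := by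
      conv_lhs => rw [← hins]
      exact Finset.sum_insert hjU
    have hexpT : Real.exp (∑ k ∈ T, theta κ k x')
        = Real.exp (theta κ j x') * Real.exp (∑ k ∈ U, theta κ k x') := by
      rw [h0, Real.exp_add]
    have hEneg : Real.exp (-(theta κ j x')) = (Real.exp (theta κ j x'))⁻¹ :=
      Real.exp_neg _
    rw [hmdT, hVdT, hexpT, hEneg]
    have hpow : (-1 : ℝ) ^ n = (-1 : ℝ) ^ (#(U.filter (fun k => k < j)))
        * (-1 : ℝ) ^ (#(U.filter (fun k => j < k))) := by
      rw [← pow_add, hcnt]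
    rw [hpow]
    have hexpne : Real.exp (theta κ j x') ≠ 0 := Real.exp_ne_zero _
    show _ = _ * (Dd A U j * (Vd κ U * Real.exp (∑ k ∈ U, theta κ k x')))
    field_simp


lemma key_step {n : ℕ} (κ : Fin M → ℝ) (A : Matrix (Fin (n + 1)) (Fin M) ℝ)
    (x x' : Fin 3 → ℝ) :
    ∑ j : Fin M,
      (∑ W ∈ (Finset.univ.powersetCard (n + 2)).filter (fun W => j ∈ W),
        (-1 : ℝ) ^ (#(W.filter (fun k => j < k))) * md A (W.erase j) *
          (Vd κ W * Real.exp (∑ k ∈ W, theta κ k x))) *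
      ((-1 : ℝ) ^ n * ∑ U ∈ Finset.univ.powersetCard n,
        Dd A U j * (Vd κ U * Real.exp (∑ k ∈ U, theta κ k x'))) = 0 := by
  classical
  have h1 : ∀ j : Fin M,
      (∑ W ∈ (Finset.univ.powersetCard (n + 2)).filter (fun W => j ∈ W),
        (-1 : ℝ) ^ (#(W.filter (fun k => j < k))) * md A (W.erase j) *
          (Vd κ W * Real.exp (∑ k ∈ W, theta κ k x))) *
      ((-1 : ℝ) ^ n * ∑ U ∈ Finset.univ.powersetCard n,
        Dd A U j * (Vd κ U * Real.exp (∑ k ∈ U, theta κ k x')))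
      = ∑ W ∈ Finset.univ.powersetCard (n + 2), (if j ∈ W then
          ∑ U ∈ Finset.univ.powersetCard n,
            (-1 : ℝ) ^ n * ((-1 : ℝ) ^ (#(W.filter (fun k => j < k))) * md A (W.erase j) *
              (Vd κ W * Real.exp (∑ k ∈ W, theta κ k x)) *
              (Dd A U j * (Vd κ U * Real.exp (∑ k ∈ U, theta κ k x')))) else 0) := by
    intro j
    rw [← Finset.sum_filter]
    rw [Finset.sum_mul]
    refine Finset.sum_congr rfl fun W _ => ?_
    rw [Finset.mul_sum, Finset.mul_sum]
    refine Finset.sum_congr rfl fun U _ => ?_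
    ring
  rw [Finset.sum_congr rfl fun j _ => h1 j]
  rw [Finset.sum_comm]
  refine Finset.sum_eq_zero fun W hW => ?_
  have hWcard : W.card = n + 2 := Finset.mem_powersetCard_univ.1 hW
  rw [Finset.sum_ite_mem, Finset.univ_inter]
  rw [← sum_colsAux W hWcard]
  rw [Finset.sum_comm]
  refine Finset.sum_eq_zero fun U hU => ?_
  have hUcard : U.card = n := Finset.mem_powersetCard_univ.1 hU
  have hterm : ∀ q : Fin (n + 2),
      (-1 : ℝ) ^ n * ((-1 : ℝ) ^ (#(W.filter (fun k => W.orderEmbOfFin hWcard q < k))) *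
        md A (W.erase (W.orderEmbOfFin hWcard q)) *
        (Vd κ W * Real.exp (∑ k ∈ W, theta κ k x)) *
        (Dd A U (W.orderEmbOfFin hWcard q) * (Vd κ U * Real.exp (∑ k ∈ U, theta κ k x'))))
      = ((-1 : ℝ) ^ (n + 1) * (-1 : ℝ) ^ n * (Vd κ W * Real.exp (∑ k ∈ W, theta κ k x)) *
          (Vd κ U * Real.exp (∑ k ∈ U, theta κ k x'))) *
        ((-1 : ℝ) ^ (q : ℕ) *
          (A.submatrix id (Fin.cons (W.orderEmbOfFin hWcard q) (⇑(U.orderEmbOfFin hUcard)))).det *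
          (A.submatrix id (fun r => W.orderEmbOfFin hWcard (q.succAbove r))).det) := by
    intro q
    have hjW : W.orderEmbOfFin hWcard q ∈ W := W.orderEmbOfFin_mem hWcard q
    have hlt : #(W.filter (fun k => k < W.orderEmbOfFin hWcard q)) = (q : ℕ) :=
      card_filter_lt_emb W hWcard q
    have htot := card_filter_lt_add_gt hjW
    rw [hWcard, hlt] at htot
    have hsgn : (-1 : ℝ) ^ (#(W.filter (fun k => W.orderEmbOfFin hWcard q < k)))
        = (-1 : ℝ) ^ (n + 1) * (-1 : ℝ) ^ (q : ℕ) := by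
      rw [← pow_add]
      have hq : n + 1 + (q : ℕ) = #(W.filter (fun k => W.orderEmbOfFin hWcard q < k))
          + 2 * (q : ℕ) := by omega
      rw [hq, pow_add, pow_mul]
      norm_num
    have hecard : (W.erase (W.orderEmbOfFin hWcard q)).card = n + 1 := by
      rw [Finset.card_erase_of_mem hjW, hWcard]
      omega
    have hmd : md A (W.erase (W.orderEmbOfFin hWcard q))
        = (A.submatrix id (fun r => W.orderEmbOfFin hWcard (q.succAbove r))).det := by
      rw [← minor_eq_md A _ hecard, minor, cols_eq_emb, cols_erase W hWcard q hecard]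
    have hDd : Dd A U (W.orderEmbOfFin hWcard q)
        = (A.submatrix id (Fin.cons (W.orderEmbOfFin hWcard q)
            (⇑(U.orderEmbOfFin hUcard)))).det := by
      rw [Dd, dif_pos hUcard]
    rw [hsgn, hmd, hDd]
    ring
  rw [Finset.sum_congr rfl fun q _ => hterm q, ← Finset.mul_sum]
  rw [pluecker A (⇑(U.orderEmbOfFin hUcard)) (⇑(W.orderEmbOfFin hWcard)), mul_zero]


end OrthoAux

/-- **orthogonality relation.** -/
theorem orthogonality_relation (N M : ℕ) (hN : 1 ≤ N) (hNM : N < M)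
    (κ : Fin M → ℝ) (hκ : StrictMono κ) (hκ0 : ∀ j, κ j ≠ 0)
    (A : Matrix (Fin N) (Fin M) ℝ) (hrank : A.rank = N)
    (x x' : Fin 3 → ℝ) (hx : tau κ A x ≠ 0) (hx' : tau κ A x' ≠ 0) :
    ∑ j : Fin M, phi κ A j x * psi κ A j x' = 0 := by
  classical
  obtain ⟨n, rfl⟩ : ∃ n, N = n + 1 := ⟨N - 1, (Nat.succ_pred_eq_of_pos hN).symm⟩
  have hmain : ∑ j : Fin M,
      (Real.exp (theta κ j x) * (κ j ^ (n + 1) *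
        ∑ s : {s : Finset (Fin M) // s.card = n + 1},
          minor A s.1 s.2 * (∏ k : Fin (n + 1), (1 - κ (cols (n + 1) s.1 s.2 k) / κ j)) *
            EJ (n + 1) κ s.1 s.2 x)) *
      (Real.exp (-(theta κ j x')) *
        (∑ s : {s : Finset (Fin M) // s.card = n + 1 ∧ j ∈ s},
          minor A s.1 s.2.1 * EJ (n + 1) κ s.1 s.2.1 x' / ∏ k ∈ s.1.erase j, (κ j - κ k)))
      = 0 := by
    rw [Finset.sum_congr rfl (fun j _ => by
      rw [phi_step κ hκ0 A j x, psi_step κ hκ A j x'])]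
    exact key_step κ A x x'
  have hterm : ∀ j : Fin M, phi κ A j x * psi κ A j x'
      = (Real.exp (theta κ j x) * (κ j ^ (n + 1) *
        ∑ s : {s : Finset (Fin M) // s.card = n + 1},
          minor A s.1 s.2 * (∏ k : Fin (n + 1), (1 - κ (cols (n + 1) s.1 s.2 k) / κ j)) *
            EJ (n + 1) κ s.1 s.2 x)) *
      (Real.exp (-(theta κ j x')) *
        (∑ s : {s : Finset (Fin M) // s.card = n + 1 ∧ j ∈ s},
          minor A s.1 s.2.1 * EJ (n + 1) κ s.1 s.2.1 x' / ∏ k ∈ s.1.erase j, (κ j - κ k)))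
      / (tau κ A x * tau κ A x') := by
    intro j
    rw [phi, psi]
    field_simp
  rw [Finset.sum_congr rfl (fun j _ => hterm j), ← Finset.sum_div, hmain, zero_div]

end
end
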